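/- In a graded connected bialgebra H over a ℚ-algebra K, the map id − η∘ε is nilpotent for the convolution product in the sense that for each a ∈ H there exists k with (id − η∘ε)^{*k}(a) = 0; hence the Eulerian idempotent 𝔢 := Σ_{k≥1} ((−1)^{k−1}/k)(id − η∘ε)^{*k} is a well-defined linear endomorphism of H, and exp^*(𝔢) = id, i.e., Σ_{k≥0} 𝔢^{*k}/k! = id. -/

import Mathlib

open TensorProduct

section ConvolutionDefs

variable (K H : Type*) [CommRing K] [Ring H] [Bialgebra K H]

/-- Convolution product of linear endomorphisms of a bialgebra:
`f * g := m ∘ (f ⊗ g) ∘ Δ`. -/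
noncomputable def conv (f g : H →ₗ[K] H) : H →ₗ[K] H :=
  (LinearMap.mul' K H) ∘ₗ (TensorProduct.map f g) ∘ₗ (Coalgebra.comul : H →ₗ[K] H ⊗[K] H)

/-- The unit of the convolution algebra: `η ∘ ε`. -/
noncomputable def unitCounit : H →ₗ[K] H :=
  (Algebra.linearMap K H) ∘ₗ (Coalgebra.counit : H →ₗ[K] K)

/-- Convolution powers, with `f^{*0} = η∘ε` (the convolution unit) and
`f^{*(k+1)} = f * f^{*k}`. -/
noncomputable def convPow (f : H →ₗ[K] H) : ℕ → (H →ₗ[K] H)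
  | 0 => unitCounit K H
  | n + 1 => conv K H f (convPow f n)

end ConvolutionDefs

section ConvLemmas

variable {K H : Type*} [CommRing K] [Ring H] [Bialgebra K H]

lemma conv_apply_repr {ι : Type*} (f g : H →ₗ[K] H) {a : H} (r : Coalgebra.Repr K a ι) :
    conv K H f g a = ∑ i ∈ r.index, f (r.left i) * g (r.right i) := by
  simp only [conv, LinearMap.comp_apply, ← r.eq, map_sum, TensorProduct.map_tmul,
    LinearMap.mul'_apply]

lemma unitCounit_apply (a : H) :
    unitCounit K H a = algebraMap K H (Coalgebra.counit (R := K) a) := rfl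

lemma conv_one_right (f : H →ₗ[K] H) : conv K H f (unitCounit K H) = f := by
  ext a
  classical
  set r := Coalgebra.Repr.arbitrary K a
  rw [conv_apply_repr f _ r]
  have h1 : ∑ i ∈ r.index, Coalgebra.counit (R := K) (r.right i) • r.left i = a := by
    have := Coalgebra.sum_tmul_counit_eq (R := K) r
    have h2 := congrArg (TensorProduct.rid K H) this
    simp only [map_sum, TensorProduct.rid_tmul, one_smul] at h2
    exact h2
  calc ∑ i ∈ r.index, f (r.left i) * unitCounit K H (r.right i)
      = ∑ i ∈ r.index, Coalgebra.counit (R := K) (r.right i) • f (r.left i) := by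
        refine Finset.sum_congr rfl fun i _ => ?_
        rw [unitCounit_apply, ← Algebra.commutes, ← Algebra.smul_def]
    _ = f a := by
        have h3 := congrArg f h1
        rw [map_sum] at h3
        simp only [map_smul] at h3
        exact h3

lemma conv_one_left (f : H →ₗ[K] H) : conv K H (unitCounit K H) f = f := by
  ext a
  classical
  set r := Coalgebra.Repr.arbitrary K a
  rw [conv_apply_repr _ f r]
  have h1 : ∑ i ∈ r.index, Coalgebra.counit (R := K) (r.left i) • r.right i = a := by
    have := Coalgebra.sum_counit_tmul_eq (R := K) r
    have h2 := congrArg (TensorProduct.lid K H) this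
    simp only [map_sum, TensorProduct.lid_tmul, one_smul] at h2
    exact h2
  calc ∑ i ∈ r.index, unitCounit K H (r.left i) * f (r.right i)
      = ∑ i ∈ r.index, Coalgebra.counit (R := K) (r.left i) • f (r.right i) := by
        refine Finset.sum_congr rfl fun i _ => ?_
        rw [unitCounit_apply, ← Algebra.smul_def]
    _ = f a := by
        have h3 := congrArg f h1
        rw [map_sum] at h3
        simp only [map_smul] at h3
        exact h3

lemma conv_assoc (f g h : H →ₗ[K] H) :
    conv K H (conv K H f g) h = conv K H f (conv K H g h) := by
  ext a
  classical
  set r := Coalgebra.Repr.arbitrary K a with hr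
  set r₁ : ∀ i : r.ι, Coalgebra.Repr K (r.left i) (H × H) := fun i => Coalgebra.Repr.arbitrary K _
  set r₂ : ∀ i : r.ι, Coalgebra.Repr K (r.right i) (H × H) := fun i => Coalgebra.Repr.arbitrary K _
  have key := Coalgebra.sum_map_tmul_tmul_eq (R := K) f g h a (repr := r) (a₁ := r₁) (a₂ := r₂)
  have key2 := congrArg (LinearMap.mul' K H ∘ₗ LinearMap.lTensor H (LinearMap.mul' K H)) key
  simp only [map_sum, LinearMap.comp_apply, LinearMap.lTensor_tmul, LinearMap.mul'_apply] at key2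
  rw [conv_apply_repr _ h r, conv_apply_repr f _ r]
  calc ∑ i ∈ r.index, conv K H f g (r.left i) * h (r.right i)
      = ∑ i ∈ r.index, ∑ j ∈ (r₁ i).index,
          f ((r₁ i).left j) * ((g ((r₁ i).right j)) * h (r.right i)) := by
        refine Finset.sum_congr rfl fun i _ => ?_
        rw [conv_apply_repr f g (r₁ i), Finset.sum_mul]
        simp [mul_assoc]
    _ = ∑ i ∈ r.index, ∑ j ∈ (r₂ i).index,
          f (r.left i) * (g ((r₂ i).left j) * h ((r₂ i).right j)) := key2.symm
    _ = ∑ i ∈ r.index, f (r.left i) * conv K H g h (r.right i) := by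
        refine Finset.sum_congr rfl fun i _ => ?_
        rw [conv_apply_repr g h (r₂ i), Finset.mul_sum]

lemma conv_add_left (f f' g : H →ₗ[K] H) :
    conv K H (f + f') g = conv K H f g + conv K H f' g := by
  simp only [conv, TensorProduct.map_add_left, LinearMap.add_comp, LinearMap.comp_add]

lemma conv_add_right (f g g' : H →ₗ[K] H) :
    conv K H f (g + g') = conv K H f g + conv K H f g' := by
  simp only [conv, TensorProduct.map_add_right, LinearMap.add_comp, LinearMap.comp_add]

lemma conv_smul_left (c : K) (f g : H →ₗ[K] H) :
    conv K H (c • f) g = c • conv K H f g := by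
  simp only [conv, TensorProduct.map_smul_left, LinearMap.smul_comp, LinearMap.comp_smul]

lemma conv_smul_right (c : K) (f g : H →ₗ[K] H) :
    conv K H f (c • g) = c • conv K H f g := by
  simp only [conv, TensorProduct.map_smul_right, LinearMap.smul_comp, LinearMap.comp_smul]

lemma conv_zero_left (g : H →ₗ[K] H) : conv K H 0 g = 0 := by
  have := conv_smul_left (0 : K) 0 g
  simpa using this

lemma conv_zero_right (g : H →ₗ[K] H) : conv K H g 0 = 0 := by
  have := conv_smul_right (0 : K) g 0
  simpa using this

end ConvLemmas

section ConvAlgebra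

variable (K H : Type*) [CommRing K] [Ring H] [Bialgebra K H]

/-- Type synonym for `H →ₗ[K] H` carrying the convolution ring structure. -/
def ConvAlg : Type _ := H →ₗ[K] H

instance : AddCommGroup (ConvAlg K H) := inferInstanceAs (AddCommGroup (H →ₗ[K] H))
instance : Module K (ConvAlg K H) := inferInstanceAs (Module K (H →ₗ[K] H))

noncomputable instance : Ring (ConvAlg K H) :=
  { (inferInstance : AddCommGroup (ConvAlg K H)) with
    mul := conv K H
    one := unitCounit K H
    mul_assoc := fun f g h => conv_assoc f g h
    one_mul := fun f => conv_one_left f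
    mul_one := fun f => conv_one_right f
    left_distrib := fun f g h => conv_add_right f g h
    right_distrib := fun f g h => conv_add_left f g h
    zero_mul := fun f => conv_zero_left f
    mul_zero := fun f => conv_zero_right f }

variable {K H}

/-- Interpret an element of the convolution algebra as a linear endomorphism. -/
def ConvAlg.toEnd (f : ConvAlg K H) : H →ₗ[K] H := f

lemma ConvAlg.toEnd_mul (f g : ConvAlg K H) :
    (f * g).toEnd = conv K H f.toEnd g.toEnd := rfl

lemma ConvAlg.toEnd_one : (1 : ConvAlg K H).toEnd = unitCounit K H := rfl

lemma ConvAlg.toEnd_add (f g : ConvAlg K H) : (f + g).toEnd = f.toEnd + g.toEnd := rfl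

lemma ConvAlg.toEnd_ksmul (c : K) (f : ConvAlg K H) : (c • f).toEnd = c • f.toEnd := rfl

lemma ConvAlg.toEnd_sum {ι : Type*} (s : Finset ι) (f : ι → ConvAlg K H) :
    (∑ i ∈ s, f i).toEnd = ∑ i ∈ s, (f i).toEnd := rfl

lemma ConvAlg.toEnd_pow (f : ConvAlg K H) (k : ℕ) :
    (f ^ k).toEnd = convPow K H f.toEnd k := by
  induction k with
  | zero => rw [pow_zero]; rfl
  | succ n ih =>
    rw [pow_succ', convPow]
    rw [ConvAlg.toEnd_mul, ih]

lemma ConvAlg.ksmul_mul (c : K) (f g : ConvAlg K H) : (c • f) * g = c • (f * g) :=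
  conv_smul_left c f g

lemma ConvAlg.mul_ksmul (c : K) (f g : ConvAlg K H) : f * (c • g) = c • (f * g) :=
  conv_smul_right c f g

variable [Algebra ℚ K]

variable (K H) in
noncomputable def convAlgebraMap : ℚ →+* ConvAlg K H where
  toFun c := algebraMap ℚ K c • (1 : ConvAlg K H)
  map_one' := by
    show algebraMap ℚ K 1 • (1 : ConvAlg K H) = 1
    rw [map_one, one_smul]
  map_mul' c d := by
    show algebraMap ℚ K (c * d) • (1 : ConvAlg K H) = _
    rw [ConvAlg.ksmul_mul, ConvAlg.mul_ksmul, one_mul, map_mul, mul_smul]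
  map_zero' := by
    show algebraMap ℚ K 0 • (1 : ConvAlg K H) = 0
    rw [map_zero, zero_smul]
  map_add' c d := by
    show algebraMap ℚ K (c + d) • (1 : ConvAlg K H) = _
    rw [map_add, add_smul]

noncomputable instance : Algebra ℚ (ConvAlg K H) :=
  (convAlgebraMap K H).toAlgebra' (by
    intro c x
    show (algebraMap ℚ K c • (1 : ConvAlg K H)) * x = x * (algebraMap ℚ K c • (1 : ConvAlg K H))
    rw [ConvAlg.ksmul_mul, ConvAlg.mul_ksmul, one_mul, mul_one])

lemma ConvAlg.qsmul_eq (c : ℚ) (f : ConvAlg K H) :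
    c • f = (algebraMap ℚ K c) • f := by
  rw [Algebra.smul_def]
  show (algebraMap ℚ K c • (1 : ConvAlg K H)) * f = _
  rw [ConvAlg.ksmul_mul, one_mul]

lemma ConvAlg.toEnd_qsmul (c : ℚ) (f : ConvAlg K H) :
    (c • f).toEnd = (algebraMap ℚ K c) • f.toEnd := by
  rw [ConvAlg.qsmul_eq]; rfl

end ConvAlgebra

section PolyLemmas

open Polynomial

/-- Truncated logarithm series `∑_{j=1}^M ((-1)^(j-1)/j) X^j`. -/
noncomputable def logPoly (M : ℕ) : Polynomial ℚ :=
  ∑ j ∈ Finset.Icc 1 M, Polynomial.C ((-1 : ℚ) ^ (j - 1) / (j : ℚ)) * Polynomial.X ^ j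

/-- Truncated exponential of the truncated logarithm. -/
noncomputable def expLogPoly (M N : ℕ) : Polynomial ℚ :=
  ∑ k ∈ Finset.range (N + 1), Polynomial.C ((Nat.factorial k : ℚ))⁻¹ * (logPoly M) ^ k

lemma logPoly_coeff_zero (M : ℕ) : (logPoly M).coeff 0 = 0 := by
  unfold logPoly
  rw [Polynomial.finset_sum_coeff]
  refine Finset.sum_eq_zero fun j hj => ?_
  rw [Polynomial.coeff_C_mul, Polynomial.coeff_X_pow]
  have : j ≠ 0 := by have := (Finset.mem_Icc.mp hj).1; omega
  simp [Ne.symm this]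

lemma logPoly_coeff (M d : ℕ) (h1 : 1 ≤ d) (h2 : d ≤ M) :
    (logPoly M).coeff d = (-1 : ℚ) ^ (d - 1) / (d : ℚ) := by
  unfold logPoly
  rw [Polynomial.finset_sum_coeff, Finset.sum_eq_single d]
  · rw [Polynomial.coeff_C_mul, Polynomial.coeff_X_pow]; simp
  · intro j _ hjd
    rw [Polynomial.coeff_C_mul, Polynomial.coeff_X_pow]
    simp [Ne.symm hjd]
  · intro hd
    exact absurd (Finset.mem_Icc.mpr ⟨h1, h2⟩) hd

lemma X_dvd_logPoly (M : ℕ) : Polynomial.X ∣ logPoly M :=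
  Polynomial.X_dvd_iff.mpr (logPoly_coeff_zero M)

lemma logPoly_eq_range (M : ℕ) :
    logPoly M = ∑ i ∈ Finset.range M, Polynomial.C ((-1 : ℚ) ^ i / ((i : ℚ) + 1)) *
      Polynomial.X ^ (i + 1) := by
  unfold logPoly
  rw [← Finset.Ico_add_one_right_eq_Icc, Finset.sum_Ico_eq_sum_range]
  refine Finset.sum_congr rfl fun i _ => ?_
  have h : 1 + i = i + 1 := Nat.add_comm 1 i
  rw [h]
  norm_num

lemma derivative_logPoly (M : ℕ) :
    Polynomial.derivative (logPoly M) = ∑ i ∈ Finset.range M, (-Polynomial.X) ^ i := by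
  rw [logPoly_eq_range, map_sum]
  refine Finset.sum_congr rfl fun i _ => ?_
  rw [Polynomial.derivative_C_mul, Polynomial.derivative_X_pow]
  simp only [Nat.add_sub_cancel, Nat.cast_add, Nat.cast_one]
  have hne : ((i : ℚ) + 1) ≠ 0 := by positivity
  rw [← mul_assoc, ← Polynomial.C_mul, div_mul_cancel₀ _ hne]
  conv_rhs => rw [neg_pow]
  rw [map_pow, map_neg, map_one]

lemma one_add_X_mul_derivative_logPoly (M : ℕ) :
    (1 + Polynomial.X) * Polynomial.derivative (logPoly M) = 1 - (-Polynomial.X) ^ M := by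
  rw [derivative_logPoly]
  have := geom_sum_mul (-Polynomial.X : Polynomial ℚ) M
  linear_combination -this

lemma coeff_X_mul_derivative (p : Polynomial ℚ) (d : ℕ) :
    (Polynomial.X * Polynomial.derivative p).coeff d = p.coeff d * d := by
  cases d with
  | zero => rw [Polynomial.mul_coeff_zero, Polynomial.coeff_X_zero]; simp
  | succ e =>
    rw [Polynomial.coeff_X_mul, Polynomial.coeff_derivative]
    push_cast; ring

lemma derivative_expLogPoly (M N : ℕ) :
    Polynomial.derivative (expLogPoly M N)
      = (expLogPoly M N - Polynomial.C ((Nat.factorial N : ℚ))⁻¹ * (logPoly M) ^ N) *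
        Polynomial.derivative (logPoly M) := by
  have hlast : ∑ k ∈ Finset.range N, Polynomial.C ((Nat.factorial k : ℚ))⁻¹ * (logPoly M) ^ k
      = expLogPoly M N - Polynomial.C ((Nat.factorial N : ℚ))⁻¹ * (logPoly M) ^ N := by
    unfold expLogPoly
    rw [Finset.sum_range_succ]
    ring
  rw [← hlast]
  unfold expLogPoly
  rw [map_sum, Finset.sum_range_succ']
  have h0 : Polynomial.derivative (Polynomial.C ((Nat.factorial 0 : ℚ))⁻¹ * (logPoly M) ^ 0)
      = 0 := by simp
  rw [h0, add_zero, Finset.sum_mul]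
  refine Finset.sum_congr rfl fun k _ => ?_
  rw [Polynomial.derivative_C_mul, Polynomial.derivative_pow]
  have hfac : ((Nat.factorial (k + 1) : ℚ))⁻¹ * ((k : ℚ) + 1) = ((Nat.factorial k : ℚ))⁻¹ := by
    rw [Nat.factorial_succ]
    have h1 : ((k : ℚ) + 1) ≠ 0 := by positivity
    have h2 : (Nat.factorial k : ℚ) ≠ 0 := Nat.cast_ne_zero.mpr (Nat.factorial_ne_zero k)
    push_cast
    field_simp
  calc Polynomial.C ((Nat.factorial (k + 1) : ℚ))⁻¹ *
        (Polynomial.C ((k + 1 : ℕ) : ℚ) * logPoly M ^ (k + 1 - 1) *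
          Polynomial.derivative (logPoly M))
      = (Polynomial.C (((Nat.factorial (k + 1) : ℚ))⁻¹ * ((k : ℚ) + 1)) * logPoly M ^ k) *
          Polynomial.derivative (logPoly M) := by
        simp only [map_mul, Nat.add_sub_cancel]
        push_cast
        ring
    _ = Polynomial.C ((Nat.factorial k : ℚ))⁻¹ * logPoly M ^ k *
          Polynomial.derivative (logPoly M) := by rw [hfac]

lemma expLogPoly_ode (M N : ℕ) :
    Polynomial.derivative (expLogPoly M N) + Polynomial.X * Polynomial.derivative (expLogPoly M N)
      = (expLogPoly M N - Polynomial.C ((Nat.factorial N : ℚ))⁻¹ * (logPoly M) ^ N)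
        - (-Polynomial.X) ^ M *
          (expLogPoly M N - Polynomial.C ((Nat.factorial N : ℚ))⁻¹ * (logPoly M) ^ N) := by
  have h1 := derivative_expLogPoly M N
  have h2 := one_add_X_mul_derivative_logPoly M
  calc Polynomial.derivative (expLogPoly M N) +
        Polynomial.X * Polynomial.derivative (expLogPoly M N)
      = (1 + Polynomial.X) * Polynomial.derivative (expLogPoly M N) := by ring
    _ = (expLogPoly M N - Polynomial.C ((Nat.factorial N : ℚ))⁻¹ * (logPoly M) ^ N) *
          ((1 + Polynomial.X) * Polynomial.derivative (logPoly M)) := by rw [h1]; ring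
    _ = _ := by rw [h2]; ring

lemma expLog_rec (M N d : ℕ) (hdM : d < M) (hdN : d < N) :
    (expLogPoly M N).coeff (d + 1) * ((d : ℚ) + 1) + (expLogPoly M N).coeff d * d
      = (expLogPoly M N).coeff d := by
  have h := congrArg (fun p => Polynomial.coeff p d) (expLogPoly_ode M N)
  simp only [Polynomial.coeff_add, Polynomial.coeff_sub, coeff_X_mul_derivative,
    Polynomial.coeff_derivative, Polynomial.coeff_C_mul] at h
  have h1 : ((-Polynomial.X : Polynomial ℚ) ^ M *
      (expLogPoly M N - Polynomial.C ((Nat.factorial N : ℚ))⁻¹ * (logPoly M) ^ N)).coeff d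
      = 0 := by
    have hdvd : (Polynomial.X : Polynomial ℚ) ^ M ∣ (-Polynomial.X) ^ M *
        (expLogPoly M N - Polynomial.C ((Nat.factorial N : ℚ))⁻¹ * (logPoly M) ^ N) := by
      refine dvd_mul_of_dvd_left ?_ _
      rw [neg_pow]
      exact dvd_mul_left _ _
    exact Polynomial.X_pow_dvd_iff.mp hdvd d hdM
  have h2 : ((logPoly M : Polynomial ℚ) ^ N).coeff d = 0 := by
    have hdvd : (Polynomial.X : Polynomial ℚ) ^ N ∣ (logPoly M) ^ N :=
      pow_dvd_pow_of_dvd (X_dvd_logPoly M) N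
    exact Polynomial.X_pow_dvd_iff.mp hdvd d hdN
  rw [h1, h2] at h
  linarith [h]

lemma expLog_coeff_zero (M N : ℕ) : (expLogPoly M N).coeff 0 = 1 := by
  unfold expLogPoly
  rw [Polynomial.finset_sum_coeff, Finset.sum_eq_single 0]
  · simp
  · intro k _ hk
    rw [Polynomial.coeff_C_mul]
    have hdvd : (Polynomial.X : Polynomial ℚ) ^ k ∣ (logPoly M) ^ k :=
      pow_dvd_pow_of_dvd (X_dvd_logPoly M) k
    rw [Polynomial.X_pow_dvd_iff.mp hdvd 0 (Nat.pos_of_ne_zero hk), mul_zero]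
  · intro h
    exact absurd (Finset.mem_range.mpr (by omega)) h

lemma coeff_one_add_X (d : ℕ) :
    (1 + Polynomial.X : Polynomial ℚ).coeff d
      = if d = 0 then 1 else if d = 1 then 1 else 0 := by
  rw [Polynomial.coeff_add, Polynomial.coeff_one, Polynomial.coeff_X]
  rcases d with _ | _ | d <;> simp

lemma expLog_coeff (M N : ℕ) : ∀ d, d ≤ M → d ≤ N →
    (expLogPoly M N).coeff d = (1 + Polynomial.X : Polynomial ℚ).coeff d := by
  intro d
  induction d with
  | zero => intro _ _; rw [expLog_coeff_zero, coeff_one_add_X]; simp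
  | succ d ih =>
    intro hdM hdN
    have hrec := expLog_rec M N d (by omega) (by omega)
    have hd := ih (by omega) (by omega)
    rw [coeff_one_add_X] at hd ⊢
    rcases d with _ | _ | e
    · simp at hd
      norm_num at hrec ⊢
      linarith
    · simp at hd
      norm_num at hrec ⊢
      linarith
    · have hd0 : (expLogPoly M N).coeff (e + 1 + 1) = 0 := by simpa using hd
      rw [hd0] at hrec
      push_cast at hrec
      have h5 : (expLogPoly M N).coeff (e + 1 + 1 + 1) * ((e : ℚ) + 1 + 1 + 1) = 0 := by
        linarith
      have hne : ((e : ℚ) + 1 + 1 + 1) ≠ 0 := by positivity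
      have h6 : (expLogPoly M N).coeff (e + 1 + 1 + 1) = 0 :=
        (mul_eq_zero.mp h5).resolve_right hne
      rw [h6]
      norm_num

end PolyLemmas

section Graded

open Polynomial

variable {K H : Type*} [CommRing K] [Ring H] [Bialgebra K H] {𝒜 : ℕ → Submodule K H}

lemma comul_killed {n : ℕ}
    (hcomul : ∀ x ∈ 𝒜 n, (Coalgebra.comul (R := K) x) ∈
        ⨆ (p : ℕ × ℕ) (_ : p.1 + p.2 = n),
          LinearMap.range (TensorProduct.map (𝒜 p.1).subtype (𝒜 p.2).subtype))
    {a : H} (ha : a ∈ 𝒜 n) (D : H ⊗[K] H →ₗ[K] H)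
    (hD : ∀ p q : ℕ, p + q = n → ∀ (x : 𝒜 p) (y : 𝒜 q), D ((x : H) ⊗ₜ[K] (y : H)) = 0) :
    D (Coalgebra.comul (R := K) a) = 0 := by
  have hmem := hcomul a ha
  have hker : (⨆ (p : ℕ × ℕ) (_ : p.1 + p.2 = n),
      LinearMap.range (TensorProduct.map (𝒜 p.1).subtype (𝒜 p.2).subtype))
      ≤ LinearMap.ker D := by
    refine iSup_le fun p => iSup_le fun hp => ?_
    rw [LinearMap.range_le_ker_iff]
    refine TensorProduct.ext' fun x y => ?_
    simp only [LinearMap.comp_apply, TensorProduct.map_tmul, Submodule.coe_subtype,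
      LinearMap.zero_apply]
    exact hD p.1 p.2 hp x y
  exact hker hmem

lemma conv_eq_comp (f g : H →ₗ[K] H) (a : H) :
    conv K H f g a = (LinearMap.mul' K H ∘ₗ TensorProduct.map f g)
      (Coalgebra.comul (R := K) a) := rfl

/-- Congruence: convolution only depends on values on the graded pieces of degree
appearing in the comultiplication. -/
lemma conv_congr_on {n : ℕ}
    (hcomul : ∀ x ∈ 𝒜 n, (Coalgebra.comul (R := K) x) ∈
        ⨆ (p : ℕ × ℕ) (_ : p.1 + p.2 = n),
          LinearMap.range (TensorProduct.map (𝒜 p.1).subtype (𝒜 p.2).subtype))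
    (f f' g g' : H →ₗ[K] H)
    (hf : ∀ q ≤ n, ∀ x ∈ 𝒜 q, f x = f' x) (hg : ∀ q ≤ n, ∀ x ∈ 𝒜 q, g x = g' x)
    {a : H} (ha : a ∈ 𝒜 n) : conv K H f g a = conv K H f' g' a := by
  have key := comul_killed hcomul ha
    (LinearMap.mul' K H ∘ₗ TensorProduct.map f g -
      LinearMap.mul' K H ∘ₗ TensorProduct.map f' g') ?_
  · have h2 : conv K H f g a - conv K H f' g' a = 0 := by
      rw [conv_eq_comp, conv_eq_comp]
      simpa [LinearMap.sub_apply] using key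
    exact sub_eq_zero.mp h2
  · intro p q hpq x y
    simp only [LinearMap.sub_apply, LinearMap.comp_apply, TensorProduct.map_tmul,
      LinearMap.mul'_apply]
    rw [hf p (by omega) x x.2, hg q (by omega) y y.2, sub_self]

lemma idSubUnit_zero_deg0 (hconnected : 𝒜 0 = 1) {a : H} (ha : a ∈ 𝒜 0) :
    (LinearMap.id (R := K) (M := H) - unitCounit K H) a = 0 := by
  rw [hconnected] at ha
  obtain ⟨c, rfl⟩ := ha
  simp [LinearMap.toSpanSingleton_apply, unitCounit_apply, map_smul,
    Algebra.algebraMap_eq_smul_one]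

lemma unitCounit_deg0 (hconnected : 𝒜 0 = 1) {a : H} (ha : a ∈ 𝒜 0) :
    unitCounit K H a = a := by
  have := idSubUnit_zero_deg0 (K := K) hconnected ha
  rw [LinearMap.sub_apply, LinearMap.id_apply, sub_eq_zero] at this
  exact this.symm

lemma convPow_vanish (hconnected : 𝒜 0 = 1)
    (hcomul : ∀ n, ∀ x ∈ 𝒜 n, (Coalgebra.comul (R := K) x) ∈
        ⨆ (p : ℕ × ℕ) (_ : p.1 + p.2 = n),
          LinearMap.range (TensorProduct.map (𝒜 p.1).subtype (𝒜 p.2).subtype)) :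
    ∀ k n, n < k → ∀ a ∈ 𝒜 n, convPow K H (LinearMap.id - unitCounit K H) k a = 0 := by
  intro k
  induction k with
  | zero => intro n hn; omega
  | succ k ih =>
    intro n hn a ha
    show conv K H (LinearMap.id - unitCounit K H)
      (convPow K H (LinearMap.id - unitCounit K H) k) a = 0
    rw [conv_eq_comp]
    refine comul_killed (hcomul n) ha _ ?_
    intro p q hpq x y
    simp only [LinearMap.comp_apply, TensorProduct.map_tmul, LinearMap.mul'_apply]
    rcases Nat.eq_zero_or_pos p with hp | hp
    · subst hp
      rw [idSubUnit_zero_deg0 hconnected x.2, zero_mul]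
    · have hq : q < k := by omega
      rw [ih q hq y y.2, mul_zero]

end Graded

/-- in a graded connected bialgebra `H` over a ℚ-algebra `K`, the map
`id − η∘ε` is `*`-nilpotent pointwise; hence the Eulerian idempotent
`𝔢 = Σ_{k≥1} ((−1)^{k−1}/k)(id − η∘ε)^{*k}` is a well-defined linear endomorphism of `H`
(its defining series is pointwise eventually constant), and `exp^*(𝔢) = id`, i.e.
`Σ_{k≥0} 𝔢^{*k}/k! = id` (again with pointwise eventually constant partial sums). -/
theorem eulerian_idempotent_exists {K H : Type*} [CommRing K] [Algebra ℚ K]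
    [Ring H] [Bialgebra K H]
    (𝒜 : ℕ → Submodule K H)
    (hinternal : DirectSum.IsInternal 𝒜)
    (hconnected : 𝒜 0 = (1 : Submodule K H))
    (hmul : ∀ i j, 𝒜 i * 𝒜 j ≤ 𝒜 (i + j))
    (hcomul : ∀ n, ∀ x ∈ 𝒜 n,
      (Coalgebra.comul : H →ₗ[K] H ⊗[K] H) x ∈
        ⨆ (p : ℕ × ℕ) (_ : p.1 + p.2 = n),
          LinearMap.range (TensorProduct.map (𝒜 p.1).subtype (𝒜 p.2).subtype)) :
    (∀ a : H, ∃ k : ℕ, 1 ≤ k ∧ ∀ k' ≥ k,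
        convPow K H (LinearMap.id - unitCounit K H) k' a = 0) ∧
    (∃ e : H →ₗ[K] H,
      (∀ a : H, ∃ N : ℕ, ∀ n ≥ N,
        e a = ∑ k ∈ Finset.Icc 1 n,
          (algebraMap ℚ K ((-1 : ℚ) ^ (k - 1) / (k : ℚ))) •
            convPow K H (LinearMap.id - unitCounit K H) k a) ∧
      (∀ a : H, ∃ N : ℕ, ∀ n ≥ N,
        a = ∑ k ∈ Finset.range (n + 1),
          (algebraMap ℚ K (1 / (Nat.factorial k : ℚ))) • convPow K H e k a)) := by
  classical
  set T : H →ₗ[K] H := LinearMap.id - unitCounit K H with hT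
  have hvan := convPow_vanish (𝒜 := 𝒜) hconnected hcomul
  have htop : ∀ a : H, a ∈ ⨆ i, 𝒜 i := by
    intro a
    rw [hinternal.submodule_iSup_eq_top]
    trivial
  constructor
  · -- pointwise nilpotency
    intro a
    refine Submodule.iSup_induction (motive := fun a => ∃ k : ℕ, 1 ≤ k ∧ ∀ k' ≥ k,
      convPow K H T k' a = 0) 𝒜 (htop a) ?_ ?_ ?_
    · intro n x hx
      exact ⟨n + 1, by omega, fun k' hk' => hvan k' n (by omega) x hx⟩
    · exact ⟨1, le_rfl, fun k' _ => map_zero _⟩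
    · rintro x y ⟨kx, hkx1, hkx⟩ ⟨ky, hky1, hky⟩
      refine ⟨max kx ky, le_trans hkx1 (le_max_left _ _), fun k' hk' => ?_⟩
      rw [map_add, hkx k' (le_trans (le_max_left _ _) hk'),
        hky k' (le_trans (le_max_right _ _) hk'), add_zero]
  · -- the Eulerian idempotent
    set eN : ℕ → (H →ₗ[K] H) := fun N => ∑ k ∈ Finset.Icc 1 N,
      (algebraMap ℚ K ((-1 : ℚ) ^ (k - 1) / (k : ℚ))) • convPow K H T k with heN
    set Dsym := (LinearEquiv.ofBijective (DirectSum.coeLinearMap 𝒜) hinternal).symm with hDsym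
    set e : H →ₗ[K] H :=
      (DirectSum.toModule K ℕ H (fun n => (eN n) ∘ₗ (𝒜 n).subtype)) ∘ₗ Dsym.toLinearMap with he
    have heN_apply : ∀ N a, eN N a = ∑ k ∈ Finset.Icc 1 N,
        (algebraMap ℚ K ((-1 : ℚ) ^ (k - 1) / (k : ℚ))) • convPow K H T k a := by
      intro N a
      rw [heN]
      simp only [LinearMap.sum_apply, LinearMap.smul_apply]
    have he_hom : ∀ n, ∀ a ∈ 𝒜 n, e a = eN n a := by
      intro n a ha
      have h1 : Dsym a = DirectSum.lof K ℕ (fun i => 𝒜 i) n ⟨a, ha⟩ := by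
        rw [hDsym, LinearEquiv.symm_apply_eq]
        symm
        show DirectSum.coeLinearMap 𝒜 _ = a
        rw [DirectSum.lof_eq_of, DirectSum.coeLinearMap_of]
      rw [he]
      show DirectSum.toModule K ℕ H _ (Dsym a) = _
      rw [h1, DirectSum.toModule_lof]
      rfl
    have heN_stable : ∀ n N, n ≤ N → ∀ a ∈ 𝒜 n, eN N a = eN n a := by
      intro n N hnN a ha
      rw [heN_apply, heN_apply]
      refine (Finset.sum_subset (Finset.Icc_subset_Icc_right hnN) ?_).symm
      intro k hk1 hk2
      have hk : n < k := by
        simp only [Finset.mem_Icc] at hk1 hk2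
        omega
      rw [hvan k n hk a ha, smul_zero]
    refine ⟨e, ?_, ?_⟩
    · -- eventual constancy of the defining series
      intro a
      refine Submodule.iSup_induction (motive := fun a => ∃ N : ℕ, ∀ n ≥ N,
        e a = ∑ k ∈ Finset.Icc 1 n,
          (algebraMap ℚ K ((-1 : ℚ) ^ (k - 1) / (k : ℚ))) • convPow K H T k a)
        𝒜 (htop a) ?_ ?_ ?_
      · intro m x hx
        refine ⟨m, fun n hn => ?_⟩
        rw [he_hom m x hx, ← heN_stable m n hn x hx, heN_apply]
      · exact ⟨0, fun n _ => by
          rw [map_zero]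
          refine (Finset.sum_eq_zero fun k _ => ?_).symm
          rw [map_zero, smul_zero]⟩
      · rintro x y ⟨Nx, hNx⟩ ⟨Ny, hNy⟩
        refine ⟨max Nx Ny, fun n hn => ?_⟩
        rw [map_add, hNx n (le_trans (le_max_left _ _) hn),
          hNy n (le_trans (le_max_right _ _) hn), ← Finset.sum_add_distrib]
        refine Finset.sum_congr rfl fun k _ => ?_
        rw [map_add, smul_add]
    · -- exp of e is the identity
      -- bridge to the convolution algebra and polynomials
      set Tc : ConvAlg K H := T with hTcdef
      have hTc : ConvAlg.toEnd Tc = T := rfl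
      have haeval : ∀ (p : Polynomial ℚ) (m : ℕ) (a : H), a ∈ 𝒜 m →
          (ConvAlg.toEnd (Polynomial.aeval Tc p)) a
            = ∑ d ∈ Finset.range (m + 1),
                algebraMap ℚ K (p.coeff d) • convPow K H T d a := by
        intro p m a ha
        have hdeg : p.natDegree < max (p.natDegree + 1) (m + 1) :=
          lt_of_lt_of_le (Nat.lt_succ_self _) (le_max_left _ _)
        rw [Polynomial.aeval_eq_sum_range' hdeg]
        have h1 : ConvAlg.toEnd (∑ d ∈ Finset.range (max (p.natDegree + 1) (m + 1)),
            p.coeff d • Tc ^ d) a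
            = ∑ d ∈ Finset.range (max (p.natDegree + 1) (m + 1)),
                algebraMap ℚ K (p.coeff d) • convPow K H T d a := by
          rw [ConvAlg.toEnd_sum, LinearMap.sum_apply]
          refine Finset.sum_congr rfl fun d _ => ?_
          rw [ConvAlg.toEnd_qsmul, ConvAlg.toEnd_pow, hTc, LinearMap.smul_apply]
        rw [h1]
        refine (Finset.sum_subset (Finset.range_subset_range.mpr (le_max_right _ _)) ?_).symm
        intro d hd1 hd2
        have hdm : m < d := by
          simp only [Finset.mem_range] at hd1 hd2
          omega
        rw [hvan d m hdm a ha, smul_zero]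
      have hagree : ∀ M q, q ≤ M → ∀ x ∈ 𝒜 q,
          e x = ConvAlg.toEnd (Polynomial.aeval Tc (logPoly M)) x := by
        intro M q hqM x hx
        rw [he_hom q x hx, heN_apply, haeval _ q x hx]
        have hsplit : Finset.range (q + 1) = insert 0 (Finset.Icc 1 q) := by
          ext d
          simp only [Finset.mem_range, Finset.mem_insert, Finset.mem_Icc]
          omega
        rw [hsplit, Finset.sum_insert (by simp)]
        rw [logPoly_coeff_zero, map_zero, zero_smul, zero_add]
        refine Finset.sum_congr rfl fun k hk => ?_
        obtain ⟨hk1, hk2⟩ := Finset.mem_Icc.mp hk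
        rw [logPoly_coeff M k hk1 (le_trans hk2 hqM)]
      have hpowagree : ∀ M k q, q ≤ M → ∀ x ∈ 𝒜 q,
          convPow K H e k x = ConvAlg.toEnd ((Polynomial.aeval Tc (logPoly M)) ^ k) x := by
        intro M k
        induction k with
        | zero =>
          intro q hq x hx
          rw [pow_zero]
          rfl
        | succ k ih =>
          intro q hq x hx
          have h1 : convPow K H e (k + 1) x = conv K H e (convPow K H e k) x := rfl
          have h2 : ConvAlg.toEnd ((Polynomial.aeval Tc (logPoly M)) ^ (k + 1)) x
              = conv K H (ConvAlg.toEnd (Polynomial.aeval Tc (logPoly M)))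
                  (ConvAlg.toEnd ((Polynomial.aeval Tc (logPoly M)) ^ k)) x := by
            rw [pow_succ']
            rfl
          rw [h1, h2]
          refine conv_congr_on (hcomul q) _ _ _ _ ?_ ?_ hx
          · intro q' hq' y hy
            exact hagree M q' (le_trans hq' hq) y hy
          · intro q' hq' y hy
            exact ih q' (le_trans hq' hq) y hy
      have hmain : ∀ m, ∀ a ∈ 𝒜 m, ∀ n, m ≤ n →
          a = ∑ k ∈ Finset.range (n + 1),
            algebraMap ℚ K (1 / (Nat.factorial k : ℚ)) • convPow K H e k a := by
        intro m a ha n hmn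
        have hA : (Polynomial.aeval Tc (expLogPoly m n))
            = ∑ k ∈ Finset.range (n + 1),
                (((Nat.factorial k : ℚ))⁻¹ • (Polynomial.aeval Tc (logPoly m)) ^ k) := by
          unfold expLogPoly
          rw [map_sum]
          refine Finset.sum_congr rfl fun k _ => ?_
          rw [map_mul, map_pow, Polynomial.aeval_C, ← Algebra.smul_def]
        have hRHS : ∑ k ∈ Finset.range (n + 1),
            algebraMap ℚ K (1 / (Nat.factorial k : ℚ)) • convPow K H e k a
            = ConvAlg.toEnd (Polynomial.aeval Tc (expLogPoly m n)) a := by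
          rw [hA, ConvAlg.toEnd_sum, LinearMap.sum_apply]
          refine Finset.sum_congr rfl fun k _ => ?_
          rw [ConvAlg.toEnd_qsmul, LinearMap.smul_apply,
            hpowagree m k m le_rfl a ha, one_div]
        rw [hRHS, haeval _ m a ha]
        have hcongr : ∀ d ∈ Finset.range (m + 1),
            algebraMap ℚ K ((expLogPoly m n).coeff d) • convPow K H T d a
            = algebraMap ℚ K ((1 + Polynomial.X : Polynomial ℚ).coeff d) •
                convPow K H T d a := by
          intro d hd
          have hdm : d ≤ m := by
            simp only [Finset.mem_range] at hd
            omega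
          rw [expLog_coeff m n d hdm (le_trans hdm hmn)]
        rw [Finset.sum_congr rfl hcongr, ← haeval (1 + Polynomial.X) m a ha]
        have h1X : Polynomial.aeval Tc (1 + Polynomial.X : Polynomial ℚ) = 1 + Tc := by
          rw [map_add, map_one, Polynomial.aeval_X]
        rw [h1X]
        show a = (unitCounit K H + T) a
        have hTa : T a = a - unitCounit K H a := rfl
        rw [LinearMap.add_apply, hTa]
        abel
      intro a
      refine Submodule.iSup_induction (motive := fun a => ∃ N : ℕ, ∀ n ≥ N,
        a = ∑ k ∈ Finset.range (n + 1),
          (algebraMap ℚ K (1 / (Nat.factorial k : ℚ))) • convPow K H e k a)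
        𝒜 (htop a) ?_ ?_ ?_
      · intro m x hx
        exact ⟨m, fun n hn => hmain m x hx n hn⟩
      · exact ⟨0, fun n _ => by
          refine (Finset.sum_eq_zero fun k _ => ?_).symm
          rw [map_zero, smul_zero]⟩
      · rintro x y ⟨Nx, hNx⟩ ⟨Ny, hNy⟩
        refine ⟨max Nx Ny, fun n hn => ?_⟩
        conv_lhs => rw [hNx n (le_trans (le_max_left _ _) hn),
          hNy n (le_trans (le_max_right _ _) hn)]
        rw [← Finset.sum_add_distrib]
        refine Finset.sum_congr rfl fun k _ => ?_
        rw [map_add, smul_add]
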